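/- Let f be a slice regular function on a symmetric slice domain Ω ⊆ ℍ (or 𝕆) with values in the same algebra, such that f(Ω_I) ⊆ ℂ_I for some imaginary unit I ∈ 𝕊. Then for every x + yJ ∈ Ω with J ∈ 𝕊, the convex combination identity |f(x+yJ)|² = ((1+⟨I,J⟩)/2)|f(x+yI)|² + ((1-⟨I,J⟩)/2)|f(x-yI)|² holds. -/

import Mathlib

noncomputable section

open Quaternion

/-- The octonions, realized via the Cayley–Dickson construction over the quaternions. -/
abbrev Octo := ℍ[ℝ] × ℍ[ℝ]

namespace Octo

/-- Octonion multiplication (Cayley–Dickson): (z₁,z₂)(w₁,w₂) = (z₁w₁ - w̄₂z₂, z₂w̄₁ + w₂z₁). -/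
def mul' (z w : Octo) : Octo :=
  (z.1 * w.1 - star w.2 * z.2, z.2 * star w.1 + w.2 * z.1)

/-- Octonionic conjugation. -/
def conj' (x : Octo) : Octo := (star x.1, -x.2)

/-- The multiplicative unit of the octonions. -/
def one' : Octo := (1, 0)

/-- The embedding of the reals into the octonions. -/
def emb (x : ℝ) : Octo := (algebraMap ℝ ℍ[ℝ] x, 0)

/-- The real part of an octonion. -/
def re' (x : Octo) : ℝ := x.1.re

/-- The imaginary part of an octonion. -/
def im' (x : Octo) : Octo := x - emb (re' x)

/-- The standard Euclidean inner product on 𝕆 ≅ ℝ⁸. -/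
def inner' (x y : Octo) : ℝ := (inner ℝ x.1 y.1 : ℝ) + (inner ℝ x.2 y.2 : ℝ)

/-- The Euclidean norm on the octonions. -/
def norm' (x : Octo) : ℝ := Real.sqrt (inner' x x)

/-- The multiplicative inverse of a nonzero octonion. -/
def inv' (x : Octo) : Octo := (inner' x x)⁻¹ • conj' x

/-- The associator [u,v,w] = (uv)w - u(vw). -/
def assoc' (u v w : Octo) : Octo := mul' (mul' u v) w - mul' u (mul' v w)

/-- n-th power of an octonion. -/
def pow' (x : Octo) : ℕ → Octo
  | 0 => one'
  | n + 1 => mul' x (pow' x n)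

/-- A purely imaginary unit octonion: I ∈ 𝕊 iff I² = -1. -/
def IsImUnit (I : Octo) : Prop := mul' I I = - one'

/-- The point x + yI on the slice ℂ_I. -/
def pt (I : Octo) (p : ℝ × ℝ) : Octo := emb p.1 + p.2 • I

/-- The slice ℂ_I = ℝ ⊕ Iℝ. -/
def sliceSet (I : Octo) : Set Octo := {z | ∃ p : ℝ × ℝ, z = pt I p}

/-- e^{θI} = cos θ + (sin θ) I. -/
def expI (θ : ℝ) (I : Octo) : Octo := emb (Real.cos θ) + Real.sin θ • I

/-- Slice regularity: on every slice ℂ_I the function is holomorphic, i.e. real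
differentiable with ∂f/∂x + I ∂f/∂y = 0. -/
def SliceRegular (Ω : Set Octo) (f : Octo → Octo) : Prop :=
  ∀ I, IsImUnit I → ∀ p : ℝ × ℝ, pt I p ∈ Ω →
    ∃ fx fy : Octo,
      HasFDerivAt (fun q : ℝ × ℝ => f (pt I q))
        ((ContinuousLinearMap.fst ℝ ℝ ℝ).smulRight fx
          + (ContinuousLinearMap.snd ℝ ℝ ℝ).smulRight fy) p
      ∧ fx + mul' I fy = 0

/-- Symmetric slice domain: open, connected, meeting the real axis, with each slice a
domain, and axially symmetric. -/
def SymSliceDomain (Ω : Set Octo) : Prop :=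
  IsOpen Ω ∧ IsConnected Ω ∧ (∃ x : ℝ, emb x ∈ Ω) ∧
  (∀ I, IsImUnit I → IsConnected {p : ℝ × ℝ | pt I p ∈ Ω}) ∧
  (∀ I J, IsImUnit I → IsImUnit J → ∀ p : ℝ × ℝ, pt I p ∈ Ω → pt J p ∈ Ω)

/-- The open unit ball 𝔹 of the octonions. -/
def ball1 : Set Octo := {z | norm' z < 1}

end Octo

set_option maxHeartbeats 1000000

namespace OctoAux
open Octo

/-! ### Linearity of `mul'` -/

lemma mul'_add_right (z w w' : Octo) : mul' z (w + w') = mul' z w + mul' z w' := by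
  refine Prod.ext ?_ ?_ <;>
    simp only [mul', Prod.fst_add, Prod.snd_add, star_add] <;> noncomm_ring

lemma mul'_smul_right (z : Octo) (r : ℝ) (w : Octo) : mul' z (r • w) = r • mul' z w := by
  refine Prod.ext ?_ ?_ <;>
    simp only [mul', Prod.smul_fst, Prod.smul_snd, Quaternion.star_smul, star_trivial,
      smul_sub, smul_add, mul_smul_comm, smul_mul_assoc]

lemma mul'_zero_right (z : Octo) : mul' z 0 = 0 := by
  simp [mul', Prod.ext_iff]

lemma mul'_neg_right (z w : Octo) : mul' z (-w) = - mul' z w := by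
  have := mul'_smul_right z (-1) w; simpa using this

lemma mul'_sub_right (z w w' : Octo) : mul' z (w - w') = mul' z w - mul' z w' := by
  rw [sub_eq_add_neg, mul'_add_right, mul'_neg_right, sub_eq_add_neg]

lemma mul'_neg_left (z w : Octo) : mul' (-z) w = - mul' z w := by
  refine Prod.ext ?_ ?_ <;>
    simp only [mul', Prod.fst_neg, Prod.snd_neg] <;> noncomm_ring

lemma mul'_one' (z : Octo) : mul' z one' = z := by
  simp [mul', one', Prod.ext_iff]

lemma one'_mul' (z : Octo) : mul' one' z = z := by
  simp [mul', one', Prod.ext_iff]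

lemma mul'_emb_right (z : Octo) (r : ℝ) : mul' z (emb r) = r • z := by
  refine Prod.ext ?_ ?_ <;>
    simp [mul', emb, Quaternion.mul_coe_eq_smul]

lemma emb_eq_smul (r : ℝ) : emb r = r • one' := by
  refine Prod.ext ?_ ?_ <;> simp [emb, one', Algebra.algebraMap_eq_smul_one]

/-! ### The inner product -/

lemma U1 (x y z : Octo) : inner' (mul' x y) (mul' x z) = inner' x x * inner' y z := by
  simp only [inner', mul', Quaternion.inner_def]
  simp only [Quaternion.re_mul, Quaternion.re_star, Quaternion.imI_star, Quaternion.imJ_star,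
    Quaternion.imK_star, Quaternion.re_sub, Quaternion.imI_sub, Quaternion.imJ_sub,
    Quaternion.imK_sub, Quaternion.re_add, Quaternion.imI_add, Quaternion.imJ_add,
    Quaternion.imK_add, Quaternion.imI_mul, Quaternion.imJ_mul, Quaternion.imK_mul,
    Quaternion.re_neg, Quaternion.imI_neg, Quaternion.imJ_neg, Quaternion.imK_neg]
  ring

lemma U2 (x y z : Octo) : inner' (mul' y x) (mul' z x) = inner' x x * inner' y z := by
  simp only [inner', mul', Quaternion.inner_def]
  simp only [Quaternion.re_mul, Quaternion.re_star, Quaternion.imI_star, Quaternion.imJ_star,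
    Quaternion.imK_star, Quaternion.re_sub, Quaternion.imI_sub, Quaternion.imJ_sub,
    Quaternion.imK_sub, Quaternion.re_add, Quaternion.imI_add, Quaternion.imJ_add,
    Quaternion.imK_add, Quaternion.imI_mul, Quaternion.imJ_mul, Quaternion.imK_mul,
    Quaternion.re_neg, Quaternion.imI_neg, Quaternion.imJ_neg, Quaternion.imK_neg]
  ring

lemma U3 (x y z : Octo) : inner' (mul' x y) z = inner' y (mul' (conj' x) z) := by
  simp only [inner', mul', conj', Quaternion.inner_def]
  simp only [star_neg, star_mul, star_sub, star_add]
  simp only [Quaternion.re_mul, Quaternion.re_star, Quaternion.imI_star, Quaternion.imJ_star,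
    Quaternion.imK_star, Quaternion.re_sub, Quaternion.imI_sub, Quaternion.imJ_sub,
    Quaternion.imK_sub, Quaternion.re_add, Quaternion.imI_add, Quaternion.imJ_add,
    Quaternion.imK_add, Quaternion.imI_mul, Quaternion.imJ_mul, Quaternion.imK_mul,
    Quaternion.re_neg, Quaternion.imI_neg, Quaternion.imJ_neg, Quaternion.imK_neg]
  ring

lemma inner'_comm (x y : Octo) : inner' x y = inner' y x := by
  simp only [inner', real_inner_comm]

lemma inner'_add_left (x y z : Octo) : inner' (x + y) z = inner' x z + inner' y z := by
  simp only [inner', Prod.fst_add, Prod.snd_add, inner_add_left]; ring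

lemma inner'_add_right (x y z : Octo) : inner' x (y + z) = inner' x y + inner' x z := by
  rw [inner'_comm, inner'_add_left, inner'_comm y x, inner'_comm z x]

lemma inner'_smul_left (r : ℝ) (x z : Octo) : inner' (r • x) z = r * inner' x z := by
  simp only [inner', Prod.smul_fst, Prod.smul_snd, real_inner_smul_left]; ring

lemma inner'_smul_right (r : ℝ) (x z : Octo) : inner' x (r • z) = r * inner' x z := by
  rw [inner'_comm, inner'_smul_left, inner'_comm]

lemma inner'_neg_left (x z : Octo) : inner' (-x) z = - inner' x z := by
  have := inner'_smul_left (-1) x z; simpa using this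

lemma inner'_neg_right (x z : Octo) : inner' x (-z) = - inner' x z := by
  rw [inner'_comm, inner'_neg_left, inner'_comm]

lemma inner'_self_nonneg (x : Octo) : 0 ≤ inner' x x := by
  simp only [inner']
  have := real_inner_self_nonneg (x := x.1)
  have := real_inner_self_nonneg (x := x.2)
  linarith

lemma inner'_self_eq_zero {x : Octo} (h : inner' x x = 0) : x = 0 := by
  have h1 := real_inner_self_nonneg (x := x.1)
  have h2 := real_inner_self_nonneg (x := x.2)
  have e1 : (inner ℝ x.1 x.1 : ℝ) = 0 := by simp only [inner'] at h; linarith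
  have e2 : (inner ℝ x.2 x.2 : ℝ) = 0 := by simp only [inner'] at h; linarith
  have g1 := inner_self_eq_zero (𝕜 := ℝ).1 e1
  have g2 := inner_self_eq_zero (𝕜 := ℝ).1 e2
  exact Prod.ext g1 g2

lemma norm'_sq (x : Octo) : norm' x ^ 2 = inner' x x :=
  Real.sq_sqrt (inner'_self_nonneg x)

/-! ### Imaginary units -/

lemma imUnit_h1 {I : Octo} (hI : IsImUnit I) : I.1 * I.1 - star I.2 * I.2 = -1 :=
  congrArg Prod.fst hI

lemma imUnit_h2 {I : Octo} (hI : IsImUnit I) : I.2 * star I.1 + I.2 * I.1 = 0 := by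
  have := congrArg Prod.snd hI
  simpa [mul', one'] using this

lemma imUnit_re {I : Octo} (hI : IsImUnit I) : I.1.re = 0 := by
  have h2 := imUnit_h2 hI
  have hsum : star I.1 + I.1 = ((2 * I.1.re : ℝ) : ℍ[ℝ]) := by
    ext <;> simp [Quaternion.re_star, Quaternion.imI_star, Quaternion.imJ_star,
      Quaternion.imK_star] <;> ring
  rw [← mul_add, hsum, mul_eq_zero] at h2
  rcases h2 with h2 | h2
  · have h1 := imUnit_h1 hI
    rw [h2] at h1
    simp only [star_zero, zero_mul, sub_zero] at h1
    by_contra hre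
    have hιI := congrArg QuaternionAlgebra.imI h1
    have hιJ := congrArg QuaternionAlgebra.imJ h1
    have hιK := congrArg QuaternionAlgebra.imK h1
    have hρ := congrArg QuaternionAlgebra.re h1
    simp only [Quaternion.imI_mul, Quaternion.imJ_mul, Quaternion.imK_mul, Quaternion.re_mul,
      Quaternion.re_neg, Quaternion.imI_neg, Quaternion.imJ_neg, Quaternion.imK_neg,
      Quaternion.re_one, Quaternion.imI_one, Quaternion.imJ_one,
      Quaternion.imK_one] at hιI hιJ hιK hρ
    have h2re : (2 * I.1.re : ℝ) ≠ 0 := by simpa using hre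
    have eI : I.1.imI = 0 := by
      have : (2 * I.1.re) * I.1.imI = 0 := by linarith
      exact (mul_eq_zero.1 this).resolve_left h2re
    have eJ : I.1.imJ = 0 := by
      have : (2 * I.1.re) * I.1.imJ = 0 := by linarith
      exact (mul_eq_zero.1 this).resolve_left h2re
    have eK : I.1.imK = 0 := by
      have : (2 * I.1.re) * I.1.imK = 0 := by linarith
      exact (mul_eq_zero.1 this).resolve_left h2re
    rw [eI, eJ, eK] at hρ
    nlinarith [sq_nonneg I.1.re]
  · have h3 := congrArg QuaternionAlgebra.re h2
    simp only [Quaternion.re_coe, Quaternion.re_zero] at h3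
    linarith

lemma imUnit_star {I : Octo} (hI : IsImUnit I) : star I.1 = -I.1 := by
  have := imUnit_re hI
  ext <;> simp [this]

lemma imUnit_normSq {I : Octo} (hI : IsImUnit I) : normSq I.1 + normSq I.2 = 1 := by
  have h1 := imUnit_h1 hI
  have ha : I.1 * I.1 = -((normSq I.1 : ℝ) : ℍ[ℝ]) := by
    have h := Quaternion.self_mul_star I.1
    rw [imUnit_star hI, mul_neg] at h
    rw [← h, neg_neg]
  have hb : star I.2 * I.2 = ((normSq I.2 : ℝ) : ℍ[ℝ]) := Quaternion.star_mul_self I.2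
  rw [ha, hb] at h1
  have h2 := congrArg QuaternionAlgebra.re h1
  simp only [Quaternion.re_sub, Quaternion.re_neg, Quaternion.re_coe, Quaternion.re_one] at h2
  linarith

lemma imUnit_neg {I : Octo} (hI : IsImUnit I) : IsImUnit (-I) := by
  unfold IsImUnit at hI ⊢
  rw [mul'_neg_left, mul'_neg_right, neg_neg, hI]

lemma mul'_mul'_self {I : Octo} (hI : IsImUnit I) (v : Octo) :
    mul' I (mul' I v) = -v := by
  have hre := imUnit_re hI
  have hn := imUnit_normSq hI
  simp only [Quaternion.normSq_def'] at hn
  obtain ⟨a, b⟩ := I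
  obtain ⟨u, w⟩ := v
  simp only at hre hn
  rw [hre] at hn
  have hn' : a.imI ^ 2 + a.imJ ^ 2 + a.imK ^ 2 +
      (b.re ^ 2 + b.imI ^ 2 + b.imJ ^ 2 + b.imK ^ 2) = 1 := by nlinarith [hn]
  refine Prod.ext ?_ ?_
  · show a * (a * u - star w * b) - star (b * star u + w * a) * b = -u
    ext
    · simp only [Quaternion.re_mul, Quaternion.re_star, Quaternion.imI_star, Quaternion.imJ_star, Quaternion.imK_star, Quaternion.re_sub, Quaternion.imI_sub, Quaternion.imJ_sub, Quaternion.imK_sub, Quaternion.re_add, Quaternion.imI_add, Quaternion.imJ_add, Quaternion.imK_add, Quaternion.imI_mul, Quaternion.imJ_mul, Quaternion.imK_mul, Quaternion.re_neg, Quaternion.imI_neg, Quaternion.imJ_neg, Quaternion.imK_neg, hre]; linear_combination (-u.re) * hn'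
    · simp only [Quaternion.re_mul, Quaternion.re_star, Quaternion.imI_star, Quaternion.imJ_star, Quaternion.imK_star, Quaternion.re_sub, Quaternion.imI_sub, Quaternion.imJ_sub, Quaternion.imK_sub, Quaternion.re_add, Quaternion.imI_add, Quaternion.imJ_add, Quaternion.imK_add, Quaternion.imI_mul, Quaternion.imJ_mul, Quaternion.imK_mul, Quaternion.re_neg, Quaternion.imI_neg, Quaternion.imJ_neg, Quaternion.imK_neg, hre]; linear_combination (-u.imI) * hn'
    · simp only [Quaternion.re_mul, Quaternion.re_star, Quaternion.imI_star, Quaternion.imJ_star, Quaternion.imK_star, Quaternion.re_sub, Quaternion.imI_sub, Quaternion.imJ_sub, Quaternion.imK_sub, Quaternion.re_add, Quaternion.imI_add, Quaternion.imJ_add, Quaternion.imK_add, Quaternion.imI_mul, Quaternion.imJ_mul, Quaternion.imK_mul, Quaternion.re_neg, Quaternion.imI_neg, Quaternion.imJ_neg, Quaternion.imK_neg, hre]; linear_combination (-u.imJ) * hn'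
    · simp only [Quaternion.re_mul, Quaternion.re_star, Quaternion.imI_star, Quaternion.imJ_star, Quaternion.imK_star, Quaternion.re_sub, Quaternion.imI_sub, Quaternion.imJ_sub, Quaternion.imK_sub, Quaternion.re_add, Quaternion.imI_add, Quaternion.imJ_add, Quaternion.imK_add, Quaternion.imI_mul, Quaternion.imJ_mul, Quaternion.imK_mul, Quaternion.re_neg, Quaternion.imI_neg, Quaternion.imJ_neg, Quaternion.imK_neg, hre]; linear_combination (-u.imK) * hn'
  · show b * star (a * u - star w * b) + (b * star u + w * a) * a = -w
    ext
    · simp only [Quaternion.re_mul, Quaternion.re_star, Quaternion.imI_star, Quaternion.imJ_star, Quaternion.imK_star, Quaternion.re_sub, Quaternion.imI_sub, Quaternion.imJ_sub, Quaternion.imK_sub, Quaternion.re_add, Quaternion.imI_add, Quaternion.imJ_add, Quaternion.imK_add, Quaternion.imI_mul, Quaternion.imJ_mul, Quaternion.imK_mul, Quaternion.re_neg, Quaternion.imI_neg, Quaternion.imJ_neg, Quaternion.imK_neg, hre]; linear_combination (-w.re) * hn'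
    · simp only [Quaternion.re_mul, Quaternion.re_star, Quaternion.imI_star, Quaternion.imJ_star, Quaternion.imK_star, Quaternion.re_sub, Quaternion.imI_sub, Quaternion.imJ_sub, Quaternion.imK_sub, Quaternion.re_add, Quaternion.imI_add, Quaternion.imJ_add, Quaternion.imK_add, Quaternion.imI_mul, Quaternion.imJ_mul, Quaternion.imK_mul, Quaternion.re_neg, Quaternion.imI_neg, Quaternion.imJ_neg, Quaternion.imK_neg, hre]; linear_combination (-w.imI) * hn'
    · simp only [Quaternion.re_mul, Quaternion.re_star, Quaternion.imI_star, Quaternion.imJ_star, Quaternion.imK_star, Quaternion.re_sub, Quaternion.imI_sub, Quaternion.imJ_sub, Quaternion.imK_sub, Quaternion.re_add, Quaternion.imI_add, Quaternion.imJ_add, Quaternion.imK_add, Quaternion.imI_mul, Quaternion.imJ_mul, Quaternion.imK_mul, Quaternion.re_neg, Quaternion.imI_neg, Quaternion.imJ_neg, Quaternion.imK_neg, hre]; linear_combination (-w.imJ) * hn'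
    · simp only [Quaternion.re_mul, Quaternion.re_star, Quaternion.imI_star, Quaternion.imJ_star, Quaternion.imK_star, Quaternion.re_sub, Quaternion.imI_sub, Quaternion.imJ_sub, Quaternion.imK_sub, Quaternion.re_add, Quaternion.imI_add, Quaternion.imJ_add, Quaternion.imK_add, Quaternion.imI_mul, Quaternion.imJ_mul, Quaternion.imK_mul, Quaternion.re_neg, Quaternion.imI_neg, Quaternion.imJ_neg, Quaternion.imK_neg, hre]; linear_combination (-w.imK) * hn'

end OctoAux

namespace OctoAux
open Octo

/-! ### Continuous linear maps -/

def mulCLM (z : Octo) : Octo →L[ℝ] Octo :=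
  LinearMap.toContinuousLinearMap
    { toFun := fun v => mul' z v
      map_add' := mul'_add_right z
      map_smul' := fun r v => by simp [mul'_smul_right] }

@[simp] lemma mulCLM_apply (z v : Octo) : mulCLM z v = mul' z v := rfl

def innerCLM (w : Octo) : Octo →L[ℝ] ℝ :=
  LinearMap.toContinuousLinearMap
    { toFun := fun v => inner' w v
      map_add' := fun x y => inner'_add_right w x y
      map_smul' := fun r x => by simp [inner'_smul_right] }

@[simp] lemma innerCLM_apply (w v : Octo) : innerCLM w v = inner' w v := rfl

/-- Analytic continuation: a CR function w.r.t. `J` on an open connected set vanishing on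
the real axis vanishes identically. -/
lemma vanish {J : Octo} (hJ : IsImUnit J) {U : Set (ℝ × ℝ)} (hUo : IsOpen U)
    (hUc : IsPreconnected U) {x₀ : ℝ} (hx₀ : (x₀, 0) ∈ U)
    {g : ℝ × ℝ → Octo}
    (hg : ∀ p ∈ U, ∃ gx gy : Octo,
      HasFDerivAt g ((ContinuousLinearMap.fst ℝ ℝ ℝ).smulRight gx
        + (ContinuousLinearMap.snd ℝ ℝ ℝ).smulRight gy) p ∧ gx + mul' J gy = 0)
    (hzero : ∀ x : ℝ, (x, 0) ∈ U → g (x, 0) = 0)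
    {p₀ : ℝ × ℝ} (hp₀ : p₀ ∈ U) : g p₀ = 0 := by
  set w : Octo := g p₀ with hw
  set ℓ : Octo →L[ℝ] ℝ := innerCLM w with hℓ
  set L : Octo →L[ℝ] ℂ := LinearMap.toContinuousLinearMap
    { toFun := fun v => (ℓ v : ℂ) - (ℓ (mul' J v) : ℂ) * Complex.I
      map_add' := fun x y => by
        simp only [mul'_add_right, map_add, Complex.ofReal_add]; ring
      map_smul' := fun r x => by
        simp only [mul'_smul_right, map_smul, RingHom.id_apply, smul_eq_mul,
          Complex.ofReal_mul, Complex.real_smul]; ring } with hLdef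
  have hLapp : ∀ v : Octo, L v = (ℓ v : ℂ) - (ℓ (mul' J v) : ℂ) * Complex.I := fun v => rfl
  set U' : Set ℂ := {z : ℂ | (z.re, z.im) ∈ U} with hU'
  have hU'o : IsOpen U' :=
    hUo.preimage (Complex.continuous_re.prodMk Complex.continuous_im)
  set ι : ℝ × ℝ → ℂ := fun p => (p.1 : ℂ) + (p.2 : ℂ) * Complex.I with hι
  have hιcont : Continuous ι := by
    apply Continuous.add
    · exact Complex.continuous_ofReal.comp continuous_fst
    · exact (Complex.continuous_ofReal.comp continuous_snd).mul continuous_const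
  have hιre : ∀ p : ℝ × ℝ, ((ι p).re, (ι p).im) = p := by
    intro p; simp [hι]
  have hιz : ∀ z : ℂ, ι (z.re, z.im) = z := by
    intro z; apply Complex.ext <;> simp [hι]
  have hU'c : IsPreconnected U' := by
    have himg : U' = ι '' U := by
      ext z
      constructor
      · intro hz; exact ⟨(z.re, z.im), hz, hιz z⟩
      · rintro ⟨p, hp, rfl⟩; show ((ι p).re, (ι p).im) ∈ U; rw [hιre]; exact hp
    rw [himg]
    exact hUc.image ι hιcont.continuousOn
  set F : ℂ → ℂ := fun z => L (g (z.re, z.im)) with hF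
  have happ : ∀ q : ℂ, (Complex.equivRealProdCLM : ℂ →L[ℝ] ℝ × ℝ) q = (q.re, q.im) :=
    fun _ => rfl
  have hdiff : DifferentiableOn ℂ F U' := by
    intro z hz
    obtain ⟨gx, gy, hd, hcr⟩ := hg (z.re, z.im) hz
    have hgy : gy = mul' J gx := by
      have h2 := congrArg (mul' J) hcr
      rw [mul'_add_right, mul'_mul'_self hJ, mul'_zero_right] at h2
      exact (add_neg_eq_zero.mp h2).symm
    have hΦ : HasFDerivAt (fun z : ℂ => (z.re, z.im))
        (Complex.equivRealProdCLM : ℂ →L[ℝ] ℝ × ℝ) z :=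
      Complex.equivRealProdCLM.hasFDerivAt
    have h1 : HasFDerivAt (fun z : ℂ => g (z.re, z.im))
        (((ContinuousLinearMap.fst ℝ ℝ ℝ).smulRight gx
          + (ContinuousLinearMap.snd ℝ ℝ ℝ).smulRight gy).comp
          (Complex.equivRealProdCLM : ℂ →L[ℝ] ℝ × ℝ)) z := hd.comp z hΦ
    have h2 : HasFDerivAt F
        (L.comp (((ContinuousLinearMap.fst ℝ ℝ ℝ).smulRight gx
          + (ContinuousLinearMap.snd ℝ ℝ ℝ).smulRight gy).comp
          (Complex.equivRealProdCLM : ℂ →L[ℝ] ℝ × ℝ))) z := L.hasFDerivAt.comp z h1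
    have hJJ : mul' J (mul' J gx) = -gx := mul'_mul'_self hJ gx
    have hEq : ((L gx • (1 : ℂ →L[ℂ] ℂ)).restrictScalars ℝ)
        = L.comp (((ContinuousLinearMap.fst ℝ ℝ ℝ).smulRight gx
          + (ContinuousLinearMap.snd ℝ ℝ ℝ).smulRight gy).comp
          (Complex.equivRealProdCLM : ℂ →L[ℝ] ℝ × ℝ)) := by
      refine ContinuousLinearMap.ext fun q => ?_
      rw [ContinuousLinearMap.coe_restrictScalars']
      simp only [ContinuousLinearMap.smul_apply, ContinuousLinearMap.one_apply,
        ContinuousLinearMap.coe_comp', Function.comp_apply, ContinuousLinearMap.add_apply,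
        ContinuousLinearMap.smulRight_apply, ContinuousLinearMap.coe_fst',
        ContinuousLinearMap.coe_snd', happ]
      rw [hgy, map_add, map_smul, map_smul, hLapp gx, hLapp (mul' J gx), hJJ, map_neg]
      apply Complex.ext <;>
        simp [Complex.add_re, Complex.add_im, Complex.mul_re, Complex.mul_im,
          Complex.real_smul, smul_eq_mul] <;> ring
    have h3 : HasFDerivAt F (L gx • (1 : ℂ →L[ℂ] ℂ)) z :=
      hasFDerivAt_of_restrictScalars ℝ h2 hEq
    exact h3.differentiableAt.differentiableWithinAt
  have hx0' : ((x₀ : ℝ) : ℂ) ∈ U' := by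
    show (((x₀ : ℝ) : ℂ).re, ((x₀ : ℝ) : ℂ).im) ∈ U
    simpa using hx₀
  have hfreq : ∃ᶠ z in nhdsWithin ((x₀ : ℝ) : ℂ) {((x₀ : ℝ) : ℂ)}ᶜ, F z = 0 := by
    obtain ⟨ε, hε, hball⟩ := Metric.isOpen_iff.1 hU'o _ hx0'
    set u : ℕ → ℂ := fun n => ((x₀ + ε / 2 / ((n : ℝ) + 1) : ℝ) : ℂ) with hu
    have hpos : ∀ n : ℕ, 0 < ε / 2 / ((n : ℝ) + 1) := by
      intro n
      apply div_pos (by linarith)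
      positivity
    have hle : ∀ n : ℕ, ε / 2 / ((n : ℝ) + 1) ≤ ε / 2 := by
      intro n
      apply div_le_self (by linarith)
      have : (0:ℝ) ≤ (n : ℝ) := Nat.cast_nonneg n
      linarith
    have hmem : ∀ n : ℕ, u n ∈ U' := by
      intro n
      apply hball
      rw [Metric.mem_ball, hu]
      rw [Complex.dist_eq, ← Complex.ofReal_sub, Complex.norm_real, Real.norm_eq_abs]
      have h1 := hpos n
      have h2 := hle n
      rw [abs_of_pos (by linarith)]
      linarith
    have hFz : ∀ n : ℕ, F (u n) = 0 := by
      intro n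
      have hmem' : ((u n).re, (u n).im) ∈ U := hmem n
      have hre : (u n).re = x₀ + ε / 2 / ((n : ℝ) + 1) := Complex.ofReal_re _
      have him : (u n).im = 0 := Complex.ofReal_im _
      rw [hF]
      simp only
      rw [hre, him] at hmem' ⊢
      rw [hzero _ hmem', map_zero]
    have htd : Filter.Tendsto u Filter.atTop (nhdsWithin ((x₀ : ℝ) : ℂ) {((x₀ : ℝ) : ℂ)}ᶜ) := by
      rw [tendsto_nhdsWithin_iff]
      constructor
      · have ht0 : Filter.Tendsto (fun n : ℕ => ε / 2 / ((n : ℝ) + 1)) Filter.atTop (nhds 0) := by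
          have := tendsto_one_div_add_atTop_nhds_zero_nat.const_mul (ε / 2)
          simpa [div_eq_mul_inv, one_div, mul_assoc] using this
        have ht1 : Filter.Tendsto (fun n : ℕ => x₀ + ε / 2 / ((n : ℝ) + 1))
            Filter.atTop (nhds x₀) := by
          simpa using tendsto_const_nhds.add ht0
        exact (Complex.continuous_ofReal.tendsto x₀).comp ht1
      · apply Filter.Eventually.of_forall
        intro n
        simp only [hu, Set.mem_compl_iff, Set.mem_singleton_iff]
        intro hcon
        have := Complex.ofReal_injective hcon
        have := hpos n
        linarith
    exact htd.frequently (Filter.Frequently.of_forall hFz)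
  have hEqOn : Set.EqOn F 0 U' :=
    (hdiff.analyticOnNhd hU'o).eqOn_zero_of_preconnected_of_frequently_eq_zero hU'c hx0' hfreq
  have hz0 : ι p₀ ∈ U' := by
    show ((ι p₀).re, (ι p₀).im) ∈ U
    rw [hιre]; exact hp₀
  have hF0 : F (ι p₀) = 0 := hEqOn hz0
  have hFw : F (ι p₀) = L w := by
    rw [hF]
    simp only
    rw [show ((ι p₀).re, (ι p₀).im) = p₀ from hιre p₀]
  rw [hFw, hLapp] at hF0
  have hre0 := congrArg Complex.re hF0
  simp only [Complex.sub_re, Complex.ofReal_re, Complex.mul_re, Complex.I_re, Complex.I_im,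
    Complex.ofReal_im, Complex.zero_re] at hre0
  have : inner' w w = 0 := by
    have : (ℓ w : ℝ) = inner' w w := by simp [hℓ]
    simp only [mul_zero, zero_mul, sub_zero, mul_one] at hre0
    linarith [hre0]
  exact inner'_self_eq_zero this

end OctoAux

namespace OctoAux
open Octo

/-! ### Gram matrix facts -/

lemma conj'_imUnit {J : Octo} (hJ : IsImUnit J) : conj' J = -J := by
  refine Prod.ext ?_ ?_ <;> simp [conj', imUnit_star hJ]

lemma G00 : inner' one' one' = 1 := by
  simp [inner', one', Quaternion.inner_def]

lemma G0I {I : Octo} (hI : IsImUnit I) : inner' one' I = 0 := by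
  simp [inner', one', Quaternion.inner_def, Quaternion.re_star, imUnit_re hI]

lemma GII {I : Octo} (hI : IsImUnit I) : inner' I I = 1 := by
  simp only [inner', Quaternion.inner_def, Quaternion.self_mul_star, Quaternion.re_coe]
  exact imUnit_normSq hI

lemma G0K {I J : Octo} (hI : IsImUnit I) (hJ : IsImUnit J) :
    inner' one' (mul' J I) = - inner' I J := by
  rw [inner'_comm]
  have h := U3 J I one'
  rw [conj'_imUnit hJ, mul'_neg_left, mul'_one', inner'_neg_right] at h
  rw [h]

lemma GIK {I J : Octo} (hI : IsImUnit I) (hJ : IsImUnit J) :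
    inner' I (mul' J I) = 0 := by
  have h := U2 I one' J
  rw [one'_mul', G0I hJ, mul_zero] at h
  exact h

lemma GJK {I J : Octo} (hI : IsImUnit I) (hJ : IsImUnit J) :
    inner' J (mul' J I) = 0 := by
  have h := U1 J one' I
  rw [mul'_one', G0I hI, mul_zero] at h
  exact h

lemma GKK {I J : Octo} (hI : IsImUnit I) (hJ : IsImUnit J) :
    inner' (mul' J I) (mul' J I) = 1 := by
  rw [U1, GII hI, GII hJ, mul_one]

lemma pt_real (K : Octo) (x : ℝ) : pt K (x, 0) = emb x := by
  simp [pt]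

lemma pt_neg_unit (K : Octo) (x y : ℝ) : pt (-K) (x, y) = pt K (x, -y) := by
  simp [pt, smul_neg, neg_smul]

end OctoAux

open Octo in
/-- Convex combination identity for slice regular functions preserving one slice. -/
theorem convex_combination_identity (Ω : Set Octo) (hΩ : SymSliceDomain Ω)
    (f : Octo → Octo) (hf : SliceRegular Ω f)
    (I : Octo) (hI : IsImUnit I)
    (hsl : ∀ z ∈ Ω ∩ sliceSet I, f z ∈ sliceSet I)
    (J : Octo) (hJ : IsImUnit J) (x y : ℝ) (hmem : pt J (x, y) ∈ Ω) :
    (norm' (f (pt J (x, y))))^2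
      = ((1 + inner' I J)/2) * (norm' (f (pt I (x, y))))^2
      + ((1 - inner' I J)/2) * (norm' (f (pt I (x, -y))))^2 := by
  open OctoAux in
  obtain ⟨hΩo, hΩc, hreal, hslc, hsym⟩ := hΩ
  obtain ⟨x₀, hx₀⟩ := hreal
  set U : Set (ℝ × ℝ) := {p : ℝ × ℝ | pt J p ∈ Ω} with hU
  have hptJ : Continuous fun p : ℝ × ℝ => pt J p := by
    have h1 : Continuous fun p : ℝ × ℝ => emb p.1 :=
      ((continuous_algebraMap ℝ ℍ[ℝ]).comp continuous_fst).prodMk continuous_const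
    exact h1.add (continuous_snd.smul continuous_const)
  have hUo : IsOpen U := hΩo.preimage hptJ
  have hUc : IsConnected U := hslc J hJ
  have hx0U : (x₀, 0) ∈ U := by
    show pt J (x₀, 0) ∈ Ω
    rw [OctoAux.pt_real]; exact hx₀
  have hII : mul' I I = -one' := hI
  set Pc : Octo →L[ℝ] Octo :=
    (2⁻¹ : ℝ) • (ContinuousLinearMap.id ℝ Octo - (mulCLM J).comp (mulCLM I)) with hPcdef
  set Qc : Octo →L[ℝ] Octo :=
    (2⁻¹ : ℝ) • (ContinuousLinearMap.id ℝ Octo + (mulCLM J).comp (mulCLM I)) with hQcdef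
  have hPapp : ∀ v : Octo, Pc v = (2⁻¹ : ℝ) • (v - mul' J (mul' I v)) := by
    intro v
    simp [hPcdef, ContinuousLinearMap.smul_apply, ContinuousLinearMap.sub_apply]
  have hQapp : ∀ v : Octo, Qc v = (2⁻¹ : ℝ) • (v + mul' J (mul' I v)) := by
    intro v
    set_option synthInstance.maxHeartbeats 200000 in
    simp [hQcdef, ContinuousLinearMap.smul_apply, ContinuousLinearMap.add_apply]
  set h : ℝ × ℝ → Octo := fun p => Pc (f (pt I p)) + Qc (f (pt I (p.1, -p.2))) with hh
  have key : ∀ p ∈ U, f (pt J p) - h p = 0 := by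
    intro p hp
    refine OctoAux.vanish (g := fun p => f (pt J p) - h p) hJ hUo hUc.isPreconnected hx0U ?_ ?_ hp
    · intro q hq
      obtain ⟨fx, fy, hdJ, hcrJ⟩ := hf J hJ q hq
      have hqI : pt I q ∈ Ω := hsym J I hJ hI q hq
      obtain ⟨A, B, hdI, hcrI⟩ := hf I hI q hqI
      have hqI' : pt I (q.1, -q.2) ∈ Ω := by
        rw [← OctoAux.pt_neg_unit]
        exact hsym J (-I) hJ (OctoAux.imUnit_neg hI) q hq
      obtain ⟨A', B', hdI', hcrI'⟩ := hf I hI (q.1, -q.2) hqI'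
      set σ : (ℝ × ℝ) →L[ℝ] (ℝ × ℝ) :=
        (ContinuousLinearMap.fst ℝ ℝ ℝ).prod (-(ContinuousLinearMap.snd ℝ ℝ ℝ)) with hσdef
      have hσapp : ∀ q' : ℝ × ℝ, σ q' = (q'.1, -q'.2) := fun _ => rfl
      have hdσ : HasFDerivAt (fun q' : ℝ × ℝ => f (pt I (q'.1, -q'.2)))
          ((((ContinuousLinearMap.fst ℝ ℝ ℝ).smulRight A'
            + (ContinuousLinearMap.snd ℝ ℝ ℝ).smulRight B')).comp σ) q :=
        by have := HasFDerivAt.comp q (hdI' : HasFDerivAt (fun q => f (pt I q)) _ (σ q)) σ.hasFDerivAt; exact this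
      have hdh : HasFDerivAt h
          (Pc.comp (((ContinuousLinearMap.fst ℝ ℝ ℝ).smulRight A
            + (ContinuousLinearMap.snd ℝ ℝ ℝ).smulRight B))
           + Qc.comp ((((ContinuousLinearMap.fst ℝ ℝ ℝ).smulRight A'
            + (ContinuousLinearMap.snd ℝ ℝ ℝ).smulRight B')).comp σ)) q :=
        (Pc.hasFDerivAt.comp q hdI).add (Qc.hasFDerivAt.comp q hdσ)
      refine ⟨fx - (Pc A + Qc A'), fy - (Pc B - Qc B'), ?_, ?_⟩
      · have hsub := hdJ.sub hdh
        have hclm : ((ContinuousLinearMap.fst ℝ ℝ ℝ).smulRight (fx - (Pc A + Qc A'))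
              + (ContinuousLinearMap.snd ℝ ℝ ℝ).smulRight (fy - (Pc B - Qc B')))
            = (((ContinuousLinearMap.fst ℝ ℝ ℝ).smulRight fx
              + (ContinuousLinearMap.snd ℝ ℝ ℝ).smulRight fy)
              - (Pc.comp (((ContinuousLinearMap.fst ℝ ℝ ℝ).smulRight A
                + (ContinuousLinearMap.snd ℝ ℝ ℝ).smulRight B))
               + Qc.comp ((((ContinuousLinearMap.fst ℝ ℝ ℝ).smulRight A'
                + (ContinuousLinearMap.snd ℝ ℝ ℝ).smulRight B')).comp σ))) := by
          refine ContinuousLinearMap.ext fun q' => ?_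
          simp only [ContinuousLinearMap.add_apply, ContinuousLinearMap.sub_apply,
            ContinuousLinearMap.smulRight_apply, ContinuousLinearMap.coe_fst',
            ContinuousLinearMap.coe_snd', ContinuousLinearMap.coe_comp',
            Function.comp_apply, hσapp, map_add, map_smul, map_neg, map_sub]
          module
        rw [hclm]
        exact hsub
      · have hA : A = -(mul' I B) := eq_neg_of_add_eq_zero_left hcrI
        have hA' : A' = -(mul' I B') := eq_neg_of_add_eq_zero_left hcrI'
        have hfx : fx = -(mul' J fy) := eq_neg_of_add_eq_zero_left hcrJ
        rw [hA, hA', hfx, hPapp, hQapp, hPapp, hQapp]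
        simp only [mul'_sub_right, mul'_add_right, mul'_neg_right, mul'_smul_right,
          mul'_mul'_self hI, mul'_mul'_self hJ]
        module
    · intro x' hx'
      have e1 : pt J (x', 0) = emb x' := OctoAux.pt_real J x'
      have e2 : pt I (x', 0) = emb x' := OctoAux.pt_real I x'
      have e3 : ((x' : ℝ), -(0:ℝ)) = ((x' : ℝ), (0:ℝ)) := by norm_num
      rw [hh]
      simp only [e3]
      rw [e1, e2]
      rw [hPapp, hQapp]
      set v := f (emb x')
      rw [sub_eq_zero]
      module
  have hrep : f (pt J (x, y)) = h (x, y) := by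
    have := key (x, y) hmem
    rwa [sub_eq_zero] at this
  have hm1 : pt I (x, y) ∈ Ω := hsym J I hJ hI (x, y) hmem
  have hm2 : pt I (x, -y) ∈ Ω := by
    rw [← OctoAux.pt_neg_unit]
    exact hsym J (-I) hJ (OctoAux.imUnit_neg hI) (x, y) hmem
  obtain ⟨⟨a, b⟩, hab⟩ := hsl _ ⟨hm1, ⟨(x, y), rfl⟩⟩
  obtain ⟨⟨c, d⟩, hcd⟩ := hsl _ ⟨hm2, ⟨(x, -y), rfl⟩⟩
  set K : Octo := mul' J I with hK
  have hval : h (x, y) = (2⁻¹*(a+c)) • one' + (2⁻¹*(b+d)) • I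
      + (2⁻¹*(b-d)) • J + (-(2⁻¹*(a-c))) • K := by
    rw [hh]
    simp only
    rw [hab, hcd, hPapp, hQapp]
    simp only [pt, emb_eq_smul, mul'_add_right, mul'_smul_right, hII, mul'_one',
      mul'_neg_right, ← hK]
    module
  have g00 : inner' one' one' = 1 := G00
  have g0i : inner' one' I = 0 := G0I hI
  have gi0 : inner' I one' = 0 := by rw [inner'_comm]; exact g0i
  have g0j : inner' one' J = 0 := G0I hJ
  have gj0 : inner' J one' = 0 := by rw [inner'_comm]; exact g0j
  have gii : inner' I I = 1 := GII hI
  have gjj : inner' J J = 1 := GII hJ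
  have gji : inner' J I = inner' I J := inner'_comm J I
  have g0k : inner' one' K = -inner' I J := G0K hI hJ
  have gk0 : inner' K one' = -inner' I J := by rw [inner'_comm]; exact g0k
  have gik : inner' I K = 0 := GIK hI hJ
  have gki : inner' K I = 0 := by rw [inner'_comm]; exact gik
  have gjk : inner' J K = 0 := GJK hI hJ
  have gkj : inner' K J = 0 := by rw [inner'_comm]; exact gjk
  have gkk : inner' K K = 1 := GKK hI hJ
  rw [norm'_sq, norm'_sq, norm'_sq, hrep, hval, hab, hcd]
  simp only [pt, emb_eq_smul]
  simp only [inner'_add_left, inner'_add_right, inner'_smul_left, inner'_smul_right,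
    g00, g0i, gi0, g0j, gj0, gii, gjj, gji, g0k, gk0, gik, gki, gjk, gkj, gkk]
  ring
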